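/- Let V = V^2 be a g-module concentrated in degree 2 (with zero differential). A linear map α_2 : V^2 → ∧^2 g^∨ ⊗ g defines a dg Loday–Pirashvili module α = {α_2} over g if and only if the corresponding map α_2 : ∧^2 g → Hom(V^2, g) is a 2-cocycle of g with coefficients in the g-module Hom(V^2, g), i.e., defines an abelian extension of g by Hom(V^2, g). -/

import Mathlib

/-!
STATEMENT 7.  (Corollary `Cork=2`.)  For a `g`-module `V = V²` concentrated in
degree 2, a linear map `α₂ : V² → ∧² g^∨ ⊗ g` defines a dg Loday–Pirashvili
module `α = {α₂}` if and only if the corresponding map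
`α₂ : ∧² g → Hom(V², g)` is a Chevalley–Eilenberg 2-cocycle of `g` with
coefficients in the `g`-module `Hom(V², g)` (with `(x·φ)(v) = ⁅x, φ v⁆ - φ ⁅x,v⁆`),
i.e. defines an abelian extension of `g` by `Hom(V², g)`.

Encoding: `V` is a family over `ℤ` all of whose terms except `V 2` are trivial;
a dg Loday–Pirashvili structure is a family `A l : V^l → ∧^l g^∨ ⊗ g`
satisfying the componentwise weak-morphism equations (`IsLP`); the 2-cocycle
condition on `α₂` is written out explicitly.
-/

open scoped BigOperators

section Prelude

variable (K g : Type) [Field K] [CharZero K] [LieRing g] [LieAlgebra K g]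

abbrev CEc (p : ℕ) (M : Type) [AddCommGroup M] [Module K M] : Type :=
  g [⋀^Fin p]→ₗ[K] M

def IsCEDiff {M : Type} [AddCommGroup M] [Module K M] [LieRingModule g M]
    (D : ∀ p : ℕ, CEc K g p M →ₗ[K] CEc K g (p+1) M) : Prop :=
  ∀ (p : ℕ) (ω : CEc K g p M) (xs : Fin (p+1) → g),
    D p ω xs = ∑ i : Fin (p+1), ((-1 : ℤ)^(i : ℕ)) •
      (⁅xs i, ω (xs ∘ i.succAbove)⁆
        - ∑ j : Fin p, if (i : ℕ) ≤ (j : ℕ) then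
            ω (Function.update (xs ∘ i.succAbove) j ⁅xs i, xs (i.succAbove j)⁆)
          else 0)

variable {K g}
variable (V : ℤ → Type)
  [∀ i, AddCommGroup (V i)] [∀ i, Module K (V i)]
  [∀ i, LieRingModule g (V i)] [∀ i, LieModule K g (V i)]

/-- Componentwise dg Loday–Pirashvili structure `α : V ⇝ g`. -/
def IsLP
    (dV : ∀ i j : ℤ, j = i + 1 → (V i →ₗ[K] V j))
    (Dg : ∀ p : ℕ, CEc K g p g →ₗ[K] CEc K g (p+1) g)
    (A : ∀ l : ℕ, V (l:ℤ) →ₗ[K] CEc K g l g) : Prop :=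
  ∀ (m : ℕ) (hk : ((m+1 : ℕ):ℤ) = (m : ℕ) + 1) (v : V (m:ℤ)) (xs : Fin (m+1) → g),
    A (m+1) (dV (m:ℤ) ((m+1 : ℕ):ℤ) hk v) xs
      + ∑ i : Fin (m+1), ((-1 : ℤ)^(i : ℕ)) • A m ⁅xs i, v⁆ (xs ∘ i.succAbove)
    = Dg m (A m v) xs

end Prelude


private lemma swap2' {K M N : Type} [Field K] [AddCommGroup M] [Module K M]
    [AddCommGroup N] [Module K N] (f : M [⋀^Fin 2]→ₗ[K] N) (a b : M) :
    f ![b, a] = - f ![a, b] := by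
  have h := f.map_swap ![a,b] (show (0:Fin 2) ≠ 1 by decide)
  have e : (![a,b] ∘ Equiv.swap (0:Fin 2) 1) = ![b,a] := by
    ext i; fin_cases i <;> simp
  rwa [e] at h

private lemma Dg2_eval {K g : Type} [Field K] [CharZero K] [LieRing g] [LieAlgebra K g]
    (Dg : ∀ p : ℕ, CEc K g p g →ₗ[K] CEc K g (p+1) g) (hDg : IsCEDiff K g Dg)
    (ω : CEc K g 2 g) (x y z : g) :
    Dg 2 ω ![x,y,z]
      = (⁅x, ω ![y,z]⁆ - ω ![⁅x,y⁆, z] - ω ![y, ⁅x,z⁆])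
        - (⁅y, ω ![x,z]⁆ - ω ![x, ⁅y,z⁆])
        + ⁅z, ω ![x,y]⁆ := by
  have h := hDg 2 ω ![x,y,z]
  rw [h]
  have c0 : (![x,y,z] ∘ (0:Fin 3).succAbove) = ![y,z] := by ext i; fin_cases i <;> rfl
  have c1 : (![x,y,z] ∘ (1:Fin 3).succAbove) = ![x,z] := by ext i; fin_cases i <;> rfl
  have c2 : (![x,y,z] ∘ (2:Fin 3).succAbove) = ![x,y] := by ext i; fin_cases i <;> rfl
  rw [Fin.sum_univ_three]
  simp only [c0, c1, c2]
  rw [Fin.sum_univ_two, Fin.sum_univ_two, Fin.sum_univ_two]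
  norm_num
  have u1 : Function.update ![y,z] (0:Fin 2) ⁅x,y⁆ = ![⁅x,y⁆,z] := by ext i; fin_cases i <;> simp
  have u2 : Function.update ![y,z] (1:Fin 2) ⁅x,z⁆ = ![y,⁅x,z⁆] := by ext i; fin_cases i <;> simp
  have u3 : Function.update ![x,z] (1:Fin 2) ⁅y,z⁆ = ![x,⁅y,z⁆] := by ext i; fin_cases i <;> simp
  rw [show ![x,y,z] (2:Fin 3) = z from rfl, u1,u2,u3]; abel

/-- Let `V` be a `g`-module concentrated in degree 2 (all
other components trivial, hence zero differential).  A linear map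
`α₂ = A 2 : V² → ∧² g^∨ ⊗ g` defines a dg Loday–Pirashvili module `α = {α₂}`
over `g` if and only if the corresponding `α₂ : ∧² g → Hom(V², g)` is a
Chevalley–Eilenberg 2-cocycle with coefficients in `Hom(V², g)` — equivalently,
defines an abelian extension of `g` by `Hom(V², g)`. -/
theorem statement7
    (K g : Type) [Field K] [CharZero K] [LieRing g] [LieAlgebra K g]
    [Module.Finite K g]
    (V : ℤ → Type) [∀ i, AddCommGroup (V i)] [∀ i, Module K (V i)]
    [∀ i, LieRingModule g (V i)] [∀ i, LieModule K g (V i)]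
    -- `V` is concentrated in degree 2
    (hV2 : ∀ i : ℤ, i ≠ 2 → Subsingleton (V i))
    (dV : ∀ i j : ℤ, j = i + 1 → (V i →ₗ[K] V j))
    (hdV : ∀ (i j : ℤ) (h : j = i + 1) (v : V i), dV i j h v = 0)
    (Dg : ∀ p : ℕ, CEc K g p g →ₗ[K] CEc K g (p+1) g)
    (hDg : IsCEDiff K g Dg)
    (A : ∀ l : ℕ, V (l:ℤ) →ₗ[K] CEc K g l g) :
    -- `α = {α₂}` is a dg Loday–Pirashvili module structure on `V` …
    IsLP V dV Dg A
      ↔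
    -- … iff `α₂ : ∧² g → Hom(V², g)` is a 2-cocycle, i.e. defines an abelian
    -- extension of `g` by `Hom(V², g)`:
    (∀ (v : V ((2:ℕ):ℤ)) (x y z : g),
      (⁅x, A 2 v ![y, z]⁆ - A 2 ⁅x, v⁆ ![y, z])
        - (⁅y, A 2 v ![x, z]⁆ - A 2 ⁅y, v⁆ ![x, z])
        + (⁅z, A 2 v ![x, y]⁆ - A 2 ⁅z, v⁆ ![x, y])
        - A 2 v ![⁅x, y⁆, z] + A 2 v ![⁅x, z⁆, y] - A 2 v ![⁅y, z⁆, x] = 0) := by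
  constructor
  · intro hLP v x y z
    have h := hLP 2 (by norm_num) v ![x,y,z]
    rw [hdV, map_zero] at h
    have c0 : (![x,y,z] ∘ (0:Fin 3).succAbove) = ![y,z] := by ext i; fin_cases i <;> rfl
    have c1 : (![x,y,z] ∘ (1:Fin 3).succAbove) = ![x,z] := by ext i; fin_cases i <;> rfl
    have c2 : (![x,y,z] ∘ (2:Fin 3).succAbove) = ![x,y] := by ext i; fin_cases i <;> rfl
    rw [Fin.sum_univ_three] at h
    simp only [c0, c1, c2, Matrix.cons_val_zero, Matrix.cons_val_one, Matrix.head_cons,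
      AlternatingMap.zero_apply, zero_add, Matrix.cons_val_two, Matrix.tail_cons] at h
    rw [Dg2_eval Dg hDg] at h
    norm_num at h
    rw [swap2' (A 2 v) ⁅x,z⁆ y, swap2' (A 2 v) ⁅y,z⁆ x] at h
    linear_combination (norm := abel) (exp := 1) h.symm
  · intro hc m hk v xs
    rw [hdV, map_zero]
    by_cases hm : m = 2
    · subst hm
      have h := hc v (xs 0) (xs 1) (xs 2)
      have hxs : xs = ![xs 0, xs 1, xs 2] := by ext i; fin_cases i <;> rfl
      rw [hxs, Dg2_eval Dg hDg, Fin.sum_univ_three]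
      have c0 : (![xs 0, xs 1, xs 2] ∘ (0:Fin 3).succAbove) = ![xs 1, xs 2] := by
        ext i; fin_cases i <;> rfl
      have c1 : (![xs 0, xs 1, xs 2] ∘ (1:Fin 3).succAbove) = ![xs 0, xs 2] := by
        ext i; fin_cases i <;> rfl
      have c2 : (![xs 0, xs 1, xs 2] ∘ (2:Fin 3).succAbove) = ![xs 0, xs 1] := by
        ext i; fin_cases i <;> rfl
      simp only [c0, c1, c2, Matrix.cons_val_zero, Matrix.cons_val_one, Matrix.head_cons,
        AlternatingMap.zero_apply, zero_add, Matrix.cons_val_two, Matrix.tail_cons]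
      norm_num
      rw [swap2' (A 2 v) ⁅xs 0, xs 2⁆ (xs 1), swap2' (A 2 v) ⁅xs 1, xs 2⁆ (xs 0)]
      linear_combination (norm := abel) (exp := 1) h.symm
    · have hsub : Subsingleton (V (m:ℤ)) := hV2 _ (by exact_mod_cast hm)
      have hv : v = 0 := Subsingleton.elim _ _
      subst hv
      simp
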